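/- arXiv:2211.17038 — 2 statements merged into one kernel-verified Lean document; each statement's English description precedes it below -/
import Mathlib

section
/- If p and q are both odd positive integers at least 3, then the triangle Coxeter group Δ(p,q,∞) has a unique subgroup of index 2, namely its von Dyck subgroup Γ(p,q,∞). -/
set_option maxHeartbeats 1000000

open FreeGroup in
/-- Relators for the triangle Coxeter group `Δ(p,q,∞)` with generators `a = 0`, `b = 1`,
`c = 2`. -/
def triangleRels (p q : ℕ∞) : Set (FreeGroup (Fin 3)) :=
  {of 0 ^ 2, of 1 ^ 2, of 2 ^ 2}
    ∪ {w | ∃ n : ℕ, (n : ℕ∞) = p ∧ w = (of 0 * of 1) ^ n}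
    ∪ {w | ∃ n : ℕ, (n : ℕ∞) = q ∧ w = (of 1 * of 2) ^ n}

/-- The triangle Coxeter group `Δ(p,q,∞)`. -/
abbrev TriangleInf (p q : ℕ∞) : Type := PresentedGroup (triangleRels p q)

section Aux

variable (p q : ℕ)

lemma triangle_rel_one {r : FreeGroup (Fin 3)} (hr : r ∈ triangleRels (p : ℕ∞) (q : ℕ∞)) :
    PresentedGroup.mk _ r = (1 : TriangleInf (p : ℕ∞) (q : ℕ∞)) :=
  (QuotientGroup.eq_one_iff r).mpr (Subgroup.subset_normalClosure hr)

lemma triangle_sq (i : Fin 3) :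
    (PresentedGroup.of i : TriangleInf (p : ℕ∞) (q : ℕ∞)) * PresentedGroup.of i = 1 := by
  have : (PresentedGroup.mk _ (FreeGroup.of i ^ 2) : TriangleInf (p : ℕ∞) (q : ℕ∞)) = 1 := by
    apply triangle_rel_one
    fin_cases i <;> simp [triangleRels]
  simpa [pow_two, PresentedGroup.of] using this

lemma triangle_ab :
    ((PresentedGroup.of 0 * PresentedGroup.of 1 : TriangleInf (p : ℕ∞) (q : ℕ∞))) ^ p = 1 := by
  have : (PresentedGroup.mk _ ((FreeGroup.of 0 * FreeGroup.of 1) ^ p) :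
      TriangleInf (p : ℕ∞) (q : ℕ∞)) = 1 :=
    triangle_rel_one p q (Or.inl (Or.inr ⟨p, rfl, rfl⟩))
  simpa [PresentedGroup.of] using this

lemma triangle_bc :
    ((PresentedGroup.of 1 * PresentedGroup.of 2 : TriangleInf (p : ℕ∞) (q : ℕ∞))) ^ q = 1 := by
  have : (PresentedGroup.mk _ ((FreeGroup.of 1 * FreeGroup.of 2) ^ q) :
      TriangleInf (p : ℕ∞) (q : ℕ∞)) = 1 :=
    triangle_rel_one p q (Or.inr ⟨q, rfl, rfl⟩)
  simpa [PresentedGroup.of] using this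

/-- The sign homomorphism to `ZMod 2`. -/
noncomputable def triangleSign : TriangleInf (p : ℕ∞) (q : ℕ∞) →* Multiplicative (ZMod 2) :=
  PresentedGroup.toGroup (f := fun _ => Multiplicative.ofAdd 1) (by
    have h : (Multiplicative.ofAdd (1 : ZMod 2)) * Multiplicative.ofAdd 1 = 1 := by decide
    rintro r (((rfl | rfl | rfl) | ⟨n, -, rfl⟩) | ⟨n, -, rfl⟩) <;>
      simp [pow_two, h])

lemma triangleSign_of (i : Fin 3) :
    triangleSign p q (PresentedGroup.of i) = Multiplicative.ofAdd 1 :=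
  PresentedGroup.toGroup.of _

end Aux

/-- For odd `p, q ≥ 3`, the triangle group `Δ(p,q,∞)` has a unique subgroup of index 2,
namely its von Dyck subgroup `Γ(p,q,∞) = ⟨ab, bc⟩`. -/
theorem unique_index_two_triangleInf (p q : ℕ) (hp : Odd p) (hq : Odd q)
    (hp3 : 3 ≤ p) (hq3 : 3 ≤ q) :
    (Subgroup.closure
        ({PresentedGroup.of 0 * PresentedGroup.of 1,
          PresentedGroup.of 1 * PresentedGroup.of 2} :
          Set (TriangleInf (p : ℕ∞) (q : ℕ∞)))).index = 2 ∧
    ∀ H : Subgroup (TriangleInf (p : ℕ∞) (q : ℕ∞)), H.index = 2 →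
      H = Subgroup.closure
        {PresentedGroup.of 0 * PresentedGroup.of 1,
         PresentedGroup.of 1 * PresentedGroup.of 2} := by
  set G := TriangleInf (p : ℕ∞) (q : ℕ∞)
  set A : G := PresentedGroup.of 0 with hA
  set B : G := PresentedGroup.of 1 with hB
  set C : G := PresentedGroup.of 2 with hC
  set S : Set G := {A * B, B * C} with hS
  set H : Subgroup G := Subgroup.closure S with hH
  have hA2 : A * A = 1 := triangle_sq p q 0
  have hB2 : B * B = 1 := triangle_sq p q 1
  have hC2 : C * C = 1 := triangle_sq p q 2
  have hAinv : A⁻¹ = A := inv_eq_of_mul_eq_one_right hA2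
  have hBinv : B⁻¹ = B := inv_eq_of_mul_eq_one_right hB2
  have hCinv : C⁻¹ = C := inv_eq_of_mul_eq_one_right hC2
  have sA : ∀ x : G, A * (A * x) = x := fun x => by rw [← mul_assoc, hA2, one_mul]
  have sB : ∀ x : G, B * (B * x) = x := fun x => by rw [← mul_assoc, hB2, one_mul]
  have sC : ∀ x : G, C * (C * x) = x := fun x => by rw [← mul_assoc, hC2, one_mul]
  have hu : A * B ∈ H := Subgroup.subset_closure (Or.inl rfl)
  have hv : B * C ∈ H := Subgroup.subset_closure (Or.inr rfl)
  -- key : elements squaring to 1 that conjugate S into H are in the normalizer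
  have key : ∀ x : G, x * x = 1 → (∀ s ∈ S, x * s * x⁻¹ ∈ H) → x ∈ Subgroup.normalizer (H : Set G) := by
    intro x hx hs
    have hxinv : x⁻¹ = x := inv_eq_of_mul_eq_one_right hx
    have sx : ∀ y : G, x * (x * y) = y := fun y => by rw [← mul_assoc, hx, one_mul]
    have fwd : ∀ h ∈ H, x * h * x⁻¹ ∈ H := by
      intro h hh
      induction hh using Subgroup.closure_induction with
      | mem s hsmem => exact hs s hsmem
      | one => simpa using H.one_mem
      | mul a b _ _ ha hb =>
        have : x * (a * b) * x⁻¹ = (x * a * x⁻¹) * (x * b * x⁻¹) := by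
          simp [hxinv, mul_assoc, sx]
        rw [this]; exact H.mul_mem ha hb
      | inv a _ ha =>
        have : x * a⁻¹ * x⁻¹ = (x * a * x⁻¹)⁻¹ := by
          simp [hxinv, mul_assoc, mul_inv_rev (G := G)]
        rw [this]; exact H.inv_mem ha
    rw [Subgroup.mem_normalizer_iff]
    intro h
    refine ⟨fwd h, fun hh => ?_⟩
    have := fwd _ hh
    simpa [hxinv, mul_assoc, sx, hx] using this
  have hAn : A ∈ Subgroup.normalizer (H : Set G) := by
    refine key A hA2 ?_
    rintro s (rfl | rfl)
    · have : A * (A * B) * A⁻¹ = (A * B)⁻¹ := by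
        simp [hA2, hB2, hC2, hAinv, hBinv, hCinv, mul_assoc, sA, sB, sC, mul_inv_rev (G := G)]
      rw [this]; exact H.inv_mem hu
    · have : A * (B * C) * A⁻¹ = (A * B) * (B * C)⁻¹ * (A * B)⁻¹ := by
        simp [hA2, hB2, hC2, hAinv, hBinv, hCinv, mul_assoc, sA, sB, sC, mul_inv_rev (G := G)]
      rw [this]; exact H.mul_mem (H.mul_mem hu (H.inv_mem hv)) (H.inv_mem hu)
  have hBn : B ∈ Subgroup.normalizer (H : Set G) := by
    refine key B hB2 ?_
    rintro s (rfl | rfl)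
    · have : B * (A * B) * B⁻¹ = (A * B)⁻¹ := by
        simp [hA2, hB2, hC2, hAinv, hBinv, hCinv, mul_assoc, sA, sB, sC, mul_inv_rev (G := G)]
      rw [this]; exact H.inv_mem hu
    · have : B * (B * C) * B⁻¹ = (B * C)⁻¹ := by
        simp [hA2, hB2, hC2, hAinv, hBinv, hCinv, mul_assoc, sA, sB, sC, mul_inv_rev (G := G)]
      rw [this]; exact H.inv_mem hv
  have hCn : C ∈ Subgroup.normalizer (H : Set G) := by
    refine key C hC2 ?_
    rintro s (rfl | rfl)
    · have : C * (A * B) * C⁻¹ = (B * C)⁻¹ * (A * B)⁻¹ * (B * C) := by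
        simp [hA2, hB2, hC2, hAinv, hBinv, hCinv, mul_assoc, sA, sB, sC, mul_inv_rev (G := G)]
      rw [this]
      exact H.mul_mem (H.mul_mem (H.inv_mem hv) (H.inv_mem hu)) hv
    · have : C * (B * C) * C⁻¹ = (B * C)⁻¹ := by
        simp [hA2, hB2, hC2, hAinv, hBinv, hCinv, mul_assoc, sA, sB, sC, mul_inv_rev (G := G)]
      rw [this]; exact H.inv_mem hv
  have hnormal : H.Normal := by
    apply Subgroup.normalizer_eq_top_iff.mp
    rw [eq_top_iff, ← PresentedGroup.closure_range_of (triangleRels (p : ℕ∞) (q : ℕ∞)),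
      Subgroup.closure_le]
    rintro - ⟨i, rfl⟩
    fin_cases i
    · exact hAn
    · exact hBn
    · exact hCn
  letI := hnormal
  set π : G →* G ⧸ H := QuotientGroup.mk' H with hπ
  have hker : ∀ g : G, g ∈ H → π g = 1 := fun g hg =>
    (QuotientGroup.eq_one_iff g).mpr hg
  have hπB2 : π B * π B = 1 := by rw [← map_mul, hB2, map_one]
  have hπBinv : (π B)⁻¹ = π B := by rw [← map_inv, hBinv]
  have hπA : π A = π B := by
    have h1 : π A * π B = 1 := by rw [← map_mul]; exact hker _ hu
    rw [← hπBinv]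
    exact (inv_eq_of_mul_eq_one_left h1).symm
  have hπC : π C = π B := by
    have h1 : π B * π C = 1 := by rw [← map_mul]; exact hker _ hv
    rw [← hπBinv]
    exact (inv_eq_of_mul_eq_one_right h1).symm
  have cover : ∀ y : G ⧸ H, y = 1 ∨ y = π B := by
    intro y
    obtain ⟨g, rfl⟩ := QuotientGroup.mk'_surjective H y
    show π g = 1 ∨ π g = π B
    have hg : g ∈ (⊤ : Subgroup G) := trivial
    rw [← PresentedGroup.closure_range_of (triangleRels (p : ℕ∞) (q : ℕ∞))] at hg
    induction hg using Subgroup.closure_induction with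
    | mem s hsmem =>
      obtain ⟨i, rfl⟩ := hsmem
      fin_cases i
      · show π A = 1 ∨ π A = π B
        rw [hπA]; exact Or.inr rfl
      · exact Or.inr rfl
      · show π C = 1 ∨ π C = π B
        rw [hπC]; exact Or.inr rfl
    | one => rw [map_one]; exact Or.inl rfl
    | mul a b _ _ ha hb =>
      rw [map_mul]
      rcases ha with ha | ha <;> rcases hb with hb | hb <;> rw [ha, hb]
      · rw [one_mul]; exact Or.inl rfl
      · rw [one_mul]; exact Or.inr rfl
      · rw [mul_one]; exact Or.inr rfl
      · rw [hπB2]; exact Or.inl rfl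
    | inv a _ ha =>
      rw [map_inv]
      rcases ha with ha | ha <;> rw [ha]
      · rw [inv_one]; exact Or.inl rfl
      · rw [hπBinv]; exact Or.inr rfl
  have hsurj : Function.Surjective (fun b : Bool => if b then π B else (1 : G ⧸ H)) := by
    intro y
    rcases cover y with rfl | rfl
    · exact ⟨false, rfl⟩
    · exact ⟨true, rfl⟩
  have hfin : Finite (G ⧸ H) := Finite.of_surjective _ hsurj
  have hle2 : H.index ≤ 2 := by
    have h2' := Nat.card_le_card_of_surjective _ hsurj
    show Nat.card (G ⧸ H) ≤ 2
    simpa [Nat.card_eq_fintype_card] using h2'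
  have hHker : H ≤ (triangleSign p q).ker := by
    rw [hH, Subgroup.closure_le]
    rintro s (rfl | rfl) <;> refine SetLike.mem_coe.mpr (MonoidHom.mem_ker.mpr ?_)
    · rw [map_mul, hA, hB, triangleSign_of, triangleSign_of]; decide
    · rw [map_mul, hB, hC, triangleSign_of, triangleSign_of]; decide
  have hkerindex : (triangleSign p q).ker.index = 2 := by
    rw [Subgroup.index_ker]
    have hrange : (triangleSign p q).range = ⊤ := by
      rw [eq_top_iff]
      rintro x -
      have hx : x = 1 ∨ x = Multiplicative.ofAdd 1 := by revert x; decide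
      rcases hx with rfl | rfl
      · exact (triangleSign p q).range.one_mem
      · exact ⟨PresentedGroup.of 0, triangleSign_of p q 0⟩
    rw [hrange, Subgroup.card_top, Nat.card_eq_fintype_card]
    rfl
  have hdvd : 2 ∣ H.index := hkerindex ▸ Subgroup.index_dvd_of_le hHker
  have hpos : 0 < H.index := Nat.card_pos
  have hidx : H.index = 2 := le_antisymm hle2 (Nat.le_of_dvd hpos hdvd)
  refine ⟨hidx, ?_⟩
  intro H' h2
  have memo : ∀ (x : G) (k : ℕ), x ^ (2 * k + 1) = 1 → x ∈ H' := by
    intro x k hxn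
    have hx2 : x ^ 2 ∈ H' := Subgroup.sq_mem_of_index_two h2 x
    have h1 : x * (x ^ 2) ^ k = 1 := by rw [← pow_mul, ← pow_succ', hxn]
    have hxeq : x = ((x ^ 2) ^ k)⁻¹ := eq_inv_of_mul_eq_one_left h1
    rw [hxeq]
    exact H'.inv_mem (pow_mem hx2 k)
  obtain ⟨kp, hkp⟩ := hp
  obtain ⟨kq, hkq⟩ := hq
  have hu' : A * B ∈ H' := memo _ kp (by rw [← hkp]; exact triangle_ab p q)
  have hv' : B * C ∈ H' := memo _ kq (by rw [← hkq]; exact triangle_bc p q)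
  have hle : H ≤ H' := by
    rw [hH, Subgroup.closure_le]
    rintro s (rfl | rfl)
    · exact hu'
    · exact hv'
  have hrel : H.relIndex H' * H'.index = H.index := Subgroup.relIndex_mul_index hle
  rw [h2, hidx] at hrel
  have hone : H.relIndex H' = 1 := by omega
  exact le_antisymm (Subgroup.relIndex_eq_one.mp hone) hle
end

section
/- Let G = G₁ *_C G₂ be an amalgamated free product over a subgroup C, and let F ≤ G be a finite subgroup. Then F is contained in a conjugate of G₁ or of G₂. -/
open Monoid PushoutI Function

namespace SerreAux

variable {C : Type*} [Group C] {G : Bool → Type*} [∀ i, Group (G i)]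

variable (φ : ∀ i, C →* G i)

/-- Alternating word predicate: `W φ a b n g` means `g` is a product of `n` letters,
each in some `(of i).range \ (base φ).range`, with alternating indices starting at `a`,
ending at `b`. -/
inductive W : Bool → Bool → ℕ → PushoutI φ → Prop
  | single {i : Bool} {x : PushoutI φ} (hx : x ∈ (of (φ := φ) i).range)
      (hx' : x ∉ (base φ).range) : W i i 1 x
  | cons {i b : Bool} {n : ℕ} {x g : PushoutI φ} (hx : x ∈ (of (φ := φ) i).range)
      (hx' : x ∉ (base φ).range) (hg : W (!i) b n g) : W i b (n + 1) (x * g)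

variable {φ}

theorem Z_le_K (i : Bool) : (base φ).range ≤ (of (φ := φ) i).range := by
  rintro x ⟨c, rfl⟩
  exact ⟨φ i c, (of_apply_eq_base φ i c)⟩

theorem W.pos {a b n g} (h : W φ a b n g) : 1 ≤ n := by
  cases h <;> omega

/-- The alternating list of indices. -/
def listAlt : Bool → ℕ → List Bool
  | _, 0 => []
  | a, n + 1 => a :: listAlt (!a) n

theorem W.exists_reduced {a b n g} (h : W φ a b n g) :
    ∃ w : CoprodI.Word G, Reduced φ w ∧ ofCoprodI w.prod = g ∧
      w.toList.map Sigma.fst = listAlt a n := by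
  induction h with
  | @single i x hx hx' =>
    obtain ⟨g₀, rfl⟩ := hx
    have hg₀ : g₀ ∉ (φ i).range := by
      rintro ⟨c, rfl⟩
      exact hx' ⟨c, (of_apply_eq_base φ i c).symm⟩
    have hg₀1 : g₀ ≠ 1 := by
      rintro rfl
      exact hg₀ ⟨1, by simp⟩
    refine ⟨⟨[⟨i, g₀⟩], by simpa using hg₀1, List.isChain_singleton _⟩, ?_, ?_, ?_⟩
    · intro l hl
      simp only [List.mem_singleton] at hl
      subst hl
      exact hg₀
    · simp [CoprodI.Word.prod]
    · simp [listAlt]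
  | @cons i b n x g hx hx' hg ih =>
    obtain ⟨w, hwred, hwprod, hwmap⟩ := ih
    obtain ⟨g₀, rfl⟩ := hx
    have hg₀ : g₀ ∉ (φ i).range := by
      rintro ⟨c, rfl⟩
      exact hx' ⟨c, (of_apply_eq_base φ i c).symm⟩
    have hg₀1 : g₀ ≠ 1 := by
      rintro rfl
      exact hg₀ ⟨1, by simp⟩
    have hchain : (⟨i, g₀⟩ :: w.toList : List (Σ i, G i)).Chain'
        fun l l' => Sigma.fst l ≠ Sigma.fst l' := by
      refine List.isChain_cons.2 ⟨?_, w.chain_ne⟩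
      intro y hy
      cases n with
      | zero => exact absurd hg.pos (by omega)
      | succ m =>
        have h1 : (w.toList.map Sigma.fst).head? = some (!i) := by
          rw [hwmap]; rfl
        rw [List.head?_map, hy] at h1
        simp only [Option.map_some, Option.some.injEq] at h1
        simp [h1]
    refine ⟨⟨⟨i, g₀⟩ :: w.toList, ?_, hchain⟩, ?_, ?_, ?_⟩
    · intro l hl
      rcases List.mem_cons.1 hl with rfl | hl
      · exact hg₀1
      · exact w.ne_one l hl
    · intro l hl
      rcases List.mem_cons.1 hl with rfl | hl
      · exact hg₀
      · exact hwred l hl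
    · show ofCoprodI (List.prod (List.map _ (⟨i,g₀⟩ :: w.toList))) = _
      rw [List.map_cons, List.prod_cons, map_mul]
      show ofCoprodI (CoprodI.of g₀) * ofCoprodI w.prod = _
      rw [ofCoprodI_of, hwprod]
    · simp [listAlt, hwmap]

/-- Key fact: a nonempty alternating word is not in the base subgroup. -/
theorem W.notZ (hφ : ∀ i, Injective (φ i)) {a b n g} (h : W φ a b n g) :
    g ∉ (base φ).range := by
  intro hg
  obtain ⟨w, hwred, hwprod, hwmap⟩ := h.exists_reduced
  have := hwred.eq_empty_of_mem_range hφ (hwprod ▸ hg)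
  subst this
  have hn := h.pos
  cases n with
  | zero => omega
  | succ m => simp [CoprodI.Word.empty, listAlt] at hwmap


theorem notZ_mul_right {g z : PushoutI φ} (hg : g ∉ (base φ).range)
    (hz : z ∈ (base φ).range) : g * z ∉ (base φ).range := fun hc =>
  hg (by simpa using mul_mem hc (inv_mem hz))

theorem notZ_mul_left {g z : PushoutI φ} (hz : z ∈ (base φ).range)
    (hg : g ∉ (base φ).range) : z * g ∉ (base φ).range := fun hc =>
  hg (by simpa using mul_mem (inv_mem hz) hc)

theorem W.cat {a b c d n m g h} (hg : W φ a b n g) (hh : W φ c d m h) (hbc : b ≠ c) :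
    W φ a d (n + m) (g * h) := by
  induction hg with
  | @single i x hx hx' =>
    have : c = !i := by revert hbc; cases c <;> cases i <;> simp
    subst this
    rw [Nat.add_comm]
    exact W.cons hx hx' hh
  | @cons i b₁ n₁ x g₁ hx hx' hg₁ ih =>
    have := W.cons hx hx' (ih hbc)
    rw [show n₁ + 1 + m = n₁ + m + 1 by omega, mul_assoc]
    exact this

theorem W.inv {a b n g} (h : W φ a b n g) : W φ b a n g⁻¹ := by
  induction h with
  | @single i x hx hx' =>
    exact W.single (inv_mem hx) (fun hc => hx' (by simpa using inv_mem hc))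
  | @cons i b₁ n₁ x g₁ hx hx' hg₁ ih =>
    rw [mul_inv_rev]
    have hs : W φ i i 1 x⁻¹ :=
      W.single (inv_mem hx) (fun hc => hx' (by simpa using inv_mem hc))
    have := ih.cat hs (by simp)
    simpa using this

theorem W.mulZR {a b n g z} (h : W φ a b n g) (hz : z ∈ (base φ).range) :
    W φ a b n (g * z) := by
  induction h with
  | @single i x hx hx' =>
    exact W.single (mul_mem hx (Z_le_K i hz))
      (fun hc => hx' (by simpa using mul_mem hc (inv_mem hz)))
  | @cons i b₁ n₁ x g₁ hx hx' hg₁ ih =>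
    rw [mul_assoc]
    exact W.cons hx hx' ih

theorem W.mulZL {a b n g z} (hz : z ∈ (base φ).range) (h : W φ a b n g) :
    W φ a b n (z * g) := by
  cases h with
  | single hx hx' =>
    exact W.single (mul_mem (Z_le_K _ hz) hx)
      (fun hc => hx' (by simpa using mul_mem (inv_mem hz) hc))
  | @cons i b₁ n₁ x g₁ hx hx' hg₁ =>
    rw [← mul_assoc]
    exact W.cons (mul_mem (Z_le_K _ hz) hx)
      (fun hc => hx' (by simpa using mul_mem (inv_mem hz) hc)) hg₁

/-- Multiplying on the right by an element of the factor matching the last index. -/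
theorem W.mulR {a b n g u} (h : W φ a b n g) (hu : u ∈ (of (φ := φ) b).range) :
    (g * u ∈ (base φ).range ∧ n = 1) ∨
      (W φ a (!b) (n - 1) (g * u) ∧ 2 ≤ n) ∨ W φ a b n (g * u) := by
  induction h with
  | @single i x hx hx' =>
    by_cases hgu : x * u ∈ (base φ).range
    · exact Or.inl ⟨hgu, rfl⟩
    · exact Or.inr (Or.inr (W.single (mul_mem hx hu) hgu))
  | @cons i b₁ n₁ x g₁ hx hx' hg₁ ih =>
    rcases ih hu with ⟨hmem, hn1⟩ | ⟨hw, hn2⟩ | hw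
    · -- g₁ * u ∈ Z, n₁ = 1; from single, b₁ = !i
      subst hn1
      have hb : b₁ = !i := by
        cases hg₁ with
        | single hx hx' => rfl
        | cons hx hx' h => exact absurd h.pos (by omega)
      refine Or.inr (Or.inl ⟨?_, by omega⟩)
      have : W φ i i 1 (x * (g₁ * u)) :=
        W.single (mul_mem hx (Z_le_K i hmem)) (notZ_mul_right hx' hmem)
      rw [mul_assoc]
      simpa [hb] using this
    · refine Or.inr (Or.inl ⟨?_, by omega⟩)
      have := W.cons hx hx' hw
      rw [show n₁ + 1 - 1 = n₁ - 1 + 1 by omega, mul_assoc]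
      exact this
    · refine Or.inr (Or.inr ?_)
      rw [mul_assoc]
      exact W.cons hx hx' hw

theorem W.mulL {a b n g u} (h : W φ a b n g) (hu : u ∈ (of (φ := φ) a).range) :
    (u * g ∈ (base φ).range ∧ n = 1) ∨
      (W φ (!a) b (n - 1) (u * g) ∧ 2 ≤ n) ∨ W φ a b n (u * g) := by
  rcases h.inv.mulR (inv_mem hu) with ⟨hmem, hn⟩ | ⟨hw, hn⟩ | hw
  · refine Or.inl ⟨?_, hn⟩
    have := inv_mem hmem
    simpa using this
  · refine Or.inr (Or.inl ⟨?_, hn⟩)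
    have := hw.inv
    simpa using this
  · refine Or.inr (Or.inr ?_)
    have := hw.inv
    simpa using this

/-- Powers of a word with distinct end indices. -/
theorem W.pow {a b n g} (h : W φ a b n g) (hab : b ≠ a) (k : ℕ) :
    W φ a b (n * (k + 1)) (g ^ (k + 1)) := by
  induction k with
  | zero => simpa using h
  | succ m ih =>
    rw [show n * (m + 1 + 1) = n + n * (m + 1) by ring, pow_succ']
    exact h.cat ih hab


/-- Destructing an alternating word. -/
theorem W.cases' {a b n g} (h : W φ a b n g) :
    (n = 1 ∧ b = a ∧ g ∈ (of (φ := φ) a).range ∧ g ∉ (base φ).range) ∨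
      ∃ x g₁ m, g = x * g₁ ∧ x ∈ (of (φ := φ) a).range ∧ x ∉ (base φ).range ∧
        W φ (!a) b m g₁ ∧ n = m + 1 := by
  cases h with
  | single hx hx' => exact Or.inl ⟨rfl, rfl, hx, hx'⟩
  | cons hx hx' hg => exact Or.inr ⟨_, _, _, rfl, hx, hx', hg, rfl⟩

section Unique
variable (hφ : ∀ i, Injective (φ i))
include hφ

/-- Matching of the final (and initial) letters' indices. -/
theorem W.lastEq {a b c d n m g} (h₁ : W φ a b n g) (h₂ : W φ c d m g) : b = d := by
  by_contra hbd
  have := h₁.cat h₂.inv (by simpa using hbd)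
  rw [mul_inv_cancel] at this
  exact this.notZ hφ ⟨1, by simp⟩

theorem W.headEq {a b c d n m g} (h₁ : W φ a b n g) (h₂ : W φ c d m g) : a = c :=
  h₁.inv.lastEq hφ h₂.inv

theorem W.lenEq_aux (k : ℕ) : ∀ {a b c d n m : _} {g : PushoutI φ}, n + m ≤ k →
    W φ a b n g → W φ c d m g → n = m := by
  induction k with
  | zero => intro a b c d n m g hk h₁ h₂; exact absurd h₁.pos (by omega)
  | succ k ih =>
    intro a b c d n m g hk h₁ h₂
    have hac : a = c := h₁.headEq hφ h₂
    subst hac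
    rcases h₁.cases' with ⟨rfl, hba, hx, hx'⟩ | ⟨x, g₁, n₁, rfl, hx, hx', hg₁, rfl⟩
    · rcases h₂.cases' with ⟨rfl, _, _, _⟩ | ⟨y, h₁', m₁, hgy, hy, hy', hh₁, rfl⟩
      · rfl
      · exfalso
        have hmem : h₁' ∈ (of (φ := φ) a).range := by
          have he : h₁' = y⁻¹ * g := by rw [hgy]; group
          rw [he]
          exact mul_mem (inv_mem hy) hx
        have hs : W φ a a 1 h₁' := W.single hmem (hh₁.notZ hφ)
        have h1m : 1 = m₁ := by
          refine ih ?_ hs hh₁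
          omega
        have := hs.headEq hφ hh₁
        simp at this
    · rcases h₂.cases' with ⟨rfl, _, hy, hy'⟩ | ⟨y, h₁', m₁, hgy, hy, hy', hh₁, rfl⟩
      · exfalso
        have hmem : g₁ ∈ (of (φ := φ) a).range := by
          have he : g₁ = x⁻¹ * (x * g₁) := by group
          rw [he]
          exact mul_mem (inv_mem hx) hy
        have hs : W φ a a 1 g₁ := W.single hmem (hg₁.notZ hφ)
        have h1m : 1 = n₁ := by
          refine ih ?_ hs hg₁
          omega
        have := hs.headEq hφ hg₁
        simp at this
      · have key : h₁' = (y⁻¹ * x) * g₁ := by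
          have : y * h₁' = x * g₁ := hgy.symm
          rw [mul_assoc, ← this]
          group
        by_cases hz : y⁻¹ * x ∈ (base φ).range
        · have hw : W φ (!a) b n₁ h₁' := key ▸ W.mulZL hz hg₁
          have : n₁ = m₁ := ih (by omega) hw hh₁
          omega
        · exfalso
          have hzK : y⁻¹ * x ∈ (of (φ := φ) a).range := mul_mem (inv_mem hy) hx
          have hw : W φ a b (n₁ + 1) h₁' := key ▸ W.cons hzK hz hg₁
          have := hw.headEq hφ hh₁
          simp at this

theorem W.lenEq {a b c d n m g} (h₁ : W φ a b n g) (h₂ : W φ c d m g) : n = m :=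
  W.lenEq_aux hφ (n + m) le_rfl h₁ h₂

end Unique


theorem W.mulK {a b n g u} (hg : W φ a b n g) {c : Bool} (hu : u ∈ (of (φ := φ) c).range) :
    g * u ∈ (base φ).range ∨ ∃ a' b' k, W φ a' b' k (g * u) := by
  by_cases huZ : u ∈ (base φ).range
  · exact Or.inr ⟨_, _, _, hg.mulZR huZ⟩
  · by_cases hc : c = b
    · subst hc
      rcases hg.mulR hu with ⟨h1, _⟩ | ⟨h2, _⟩ | h3
      · exact Or.inl h1
      · exact Or.inr ⟨_, _, _, h2⟩
      · exact Or.inr ⟨_, _, _, h3⟩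
    · exact Or.inr ⟨_, _, _, hg.cat (W.single hu huZ) (Ne.symm hc)⟩

theorem W.mulW {c d m h} (hh : W φ c d m h) :
    ∀ {a b n} {g : PushoutI φ}, W φ a b n g →
      g * h ∈ (base φ).range ∨ ∃ a' b' k, W φ a' b' k (g * h) := by
  induction hh with
  | single hy hy' =>
    intro a b n g hg
    exact hg.mulK hy
  | @cons i b₁ n₁ y h₁ hy hy' hh₁ ih =>
    intro a b n g hg
    rw [← mul_assoc]
    rcases hg.mulK hy with hmem | ⟨a', b', k, hw⟩
    · exact Or.inr ⟨_, _, _, W.mulZL hmem hh₁⟩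
    · exact ih hw

theorem exists_w (g : PushoutI φ) :
    g ∈ (base φ).range ∨ ∃ a b n, W φ a b n g := by
  induction g using PushoutI.induction_on with
  | of i g₀ =>
    by_cases hg : of (φ := φ) i g₀ ∈ (base φ).range
    · exact Or.inl hg
    · exact Or.inr ⟨i, i, 1, W.single ⟨g₀, rfl⟩ hg⟩
  | base c => exact Or.inl ⟨c, rfl⟩
  | mul x y hx hy =>
    rcases hx with hx | ⟨a, b, n, hx⟩
    · rcases hy with hy | ⟨a, b, n, hy⟩
      · exact Or.inl (mul_mem hx hy)
      · exact Or.inr ⟨_, _, _, W.mulZL hx hy⟩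
    · rcases hy with hy | ⟨c, d, m, hy⟩
      · exact Or.inr ⟨_, _, _, hx.mulZR hy⟩
      · rcases hy.mulW hx with hmem | ⟨a', b', k, hw⟩
        · exact Or.inl hmem
        · exact Or.inr ⟨_, _, _, hw⟩

open scoped Classical in
/-- The syllable length of an element of the amalgam. -/
noncomputable def len (g : PushoutI φ) : ℕ :=
  if h : ∃ n a b, W φ a b n g then h.choose else 0

section Len
variable (hφ : ∀ i, Injective (φ i))
include hφ

theorem len_spec {a b n g} (h : W φ a b n g) : len g = n := by
  rw [len, dif_pos ⟨n, a, b, h⟩]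
  obtain ⟨a', b', hw⟩ := (⟨n, a, b, h⟩ : ∃ n a b, W φ a b n g).choose_spec
  exact hw.lenEq hφ h

theorem len_of_Z {g : PushoutI φ} (hg : g ∈ (base φ).range) : len g = 0 := by
  rw [len, dif_neg]
  rintro ⟨n, a, b, hw⟩
  exact hw.notZ hφ hg

theorem w_of_notZ {g : PushoutI φ} (hg : g ∉ (base φ).range) :
    ∃ a b, W φ a b (len g) g := by
  rcases exists_w g with h | ⟨a, b, n, h⟩
  · exact absurd h hg
  · exact ⟨a, b, (len_spec hφ h) ▸ h⟩

theorem len_pos_of_notZ {g : PushoutI φ} (hg : g ∉ (base φ).range) : 1 ≤ len g := by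
  obtain ⟨a, b, h⟩ := w_of_notZ hφ hg
  exact h.pos

theorem len_le_one_of_mem {g : PushoutI φ} {i : Bool}
    (hg : g ∈ (of (φ := φ) i).range) : len g ≤ 1 := by
  by_cases hZ : g ∈ (base φ).range
  · rw [len_of_Z hφ hZ]; omega
  · rw [len_spec hφ (W.single hg hZ)]

theorem len_conj_le {u y : PushoutI φ} {a : Bool} {m : ℕ}
    (hu : u ∈ (of (φ := φ) a).range) (hy : W φ a a m y) :
    len (u⁻¹ * y * u) ≤ m := by
  rcases hy.mulL (inv_mem hu) with ⟨h1, hm⟩ | ⟨h2, hm⟩ | h3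
  · calc len (u⁻¹ * y * u) ≤ 1 := len_le_one_of_mem hφ (mul_mem (Z_le_K a h1) hu)
    _ ≤ m := hy.pos
  · rcases h2.mulR hu with ⟨hc1, _⟩ | ⟨hc2, _⟩ | hc3
    · rw [len_of_Z hφ hc1]; omega
    · rw [len_spec hφ hc2]; omega
    · rw [len_spec hφ hc3]; omega
  · rcases h3.mulR hu with ⟨hc1, _⟩ | ⟨hc2, _⟩ | hc3
    · rw [len_of_Z hφ hc1]; omega
    · rw [len_spec hφ hc2]; omega
    · rw [len_spec hφ hc3]

end Len

section Main
variable (hφ : ∀ i, Injective (φ i))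

/-- Maximal syllable length over a subgroup. -/
noncomputable def maxlen (F : Subgroup (PushoutI φ)) : ℕ :=
  sSup (len '' (F : Set (PushoutI φ)))

/-- Number of elements of maximal length. -/
noncomputable def cnt (F : Subgroup (PushoutI φ)) : ℕ :=
  {y : PushoutI φ | y ∈ F ∧ len y = maxlen F}.ncard

/-- Induction measure. -/
noncomputable def meas (F : Subgroup (PushoutI φ)) : ℕ :=
  (Nat.card F + 1) * maxlen F + cnt F

theorem le_maxlen {F : Subgroup (PushoutI φ)} (hF : Finite F) {x : PushoutI φ}
    (hx : x ∈ F) : len x ≤ maxlen F :=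
  le_csSup (Set.Finite.bddAbove (Set.Finite.image _ (Set.toFinite _))) ⟨x, hx, rfl⟩

theorem cnt_le_card (F : Subgroup (PushoutI φ)) (hF : Finite F) :
    cnt F ≤ Nat.card F := by
  rw [cnt]
  calc {y : PushoutI φ | y ∈ F ∧ len y = maxlen F}.ncard
      ≤ (F : Set (PushoutI φ)).ncard :=
        Set.ncard_le_ncard (fun y hy => hy.1) (Set.toFinite _)
    _ = Nat.card F := (Nat.card_coe_set_eq _)

theorem finOrder_in (F : Subgroup (PushoutI φ)) (hF : Finite F) {x : PushoutI φ}
    (hx : x ∈ F) : ∃ k : ℕ, x ^ (k + 1) = 1 := by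
  have h := isOfFinOrder_of_finite (⟨x, hx⟩ : F)
  obtain ⟨k, hk0, hk⟩ := isOfFinOrder_iff_pow_eq_one.mp h
  refine ⟨k - 1, ?_⟩
  have hxk : x ^ k = 1 := by
    have := congrArg Subtype.val hk
    simpa using this
  rwa [show k - 1 + 1 = k by omega]

include hφ

theorem not_cyc_red {F : Subgroup (PushoutI φ)} (hF : Finite F) {x : PushoutI φ}
    (hx : x ∈ F) {a b n} (hw : W φ a b n x) : b = a := by
  by_contra hba
  obtain ⟨k, hk⟩ := finOrder_in F hF hx
  have h2 := (hw.pow hba k).notZ hφ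
  rw [hk] at h2
  exact h2 (one_mem _)

omit hφ in
theorem W.mem_of_one {i : Bool} {g : PushoutI φ} (h : W φ i i 1 g) :
    g ∈ (of (φ := φ) i).range := by
  rcases h.cases' with ⟨-, -, hmem, -⟩ | ⟨_, _, _, -, -, -, hw, hm⟩
  · exact hmem
  · exact absurd hw.pos (by omega)

theorem base_case (F : Subgroup (PushoutI φ)) (hF : Finite F)
    (h1 : ∀ y ∈ F, len y ≤ 1) :
    ∃ (i : Bool) (g : PushoutI φ), ∀ x ∈ F, g⁻¹ * x * g ∈ (of (φ := φ) i).range := by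
  have hK : ∀ y ∈ F, y ∉ (base φ).range → ∃ i, W φ i i 1 y := by
    intro y hy hyZ
    obtain ⟨c, d, hw⟩ := w_of_notZ hφ hyZ
    have hlen : len y = 1 := le_antisymm (h1 y hy) (len_pos_of_notZ hφ hyZ)
    rw [hlen] at hw
    rcases hw.cases' with ⟨_, heq, hmem, hnot⟩ | ⟨u, g₁, m, _, _, _, hg₁, hm⟩
    · exact ⟨_, W.single hmem hnot⟩
    · exact absurd hg₁.pos (by omega)
  by_cases hfalse : ∀ y ∈ F, y ∈ (of (φ := φ) false).range
  · exact ⟨false, 1, fun x hx => by simpa using hfalse x hx⟩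
  by_cases htrue : ∀ y ∈ F, y ∈ (of (φ := φ) true).range
  · exact ⟨true, 1, fun x hx => by simpa using htrue x hx⟩
  exfalso
  push_neg at hfalse htrue
  obtain ⟨x, hxF, hxK⟩ := hfalse
  obtain ⟨y, hyF, hyK⟩ := htrue
  have hxZ : x ∉ (base φ).range := fun h => hxK (Z_le_K false h)
  have hyZ : y ∉ (base φ).range := fun h => hyK (Z_le_K true h)
  obtain ⟨i, hxw⟩ := hK x hxF hxZ
  obtain ⟨j, hyw⟩ := hK y hyF hyZ
  have hi : i = true := by
    cases i
    · exact absurd hxw.mem_of_one hxK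
    · rfl
  have hj : j = false := by
    cases j
    · rfl
    · exact absurd hyw.mem_of_one hyK
  subst hi; subst hj
  have hxy : W φ true false 2 (x * y) := hxw.cat hyw (by simp)
  exact absurd (not_cyc_red hφ hF (mul_mem hxF hyF) hxy) (by simp)

theorem main_aux : ∀ (k : ℕ) (F : Subgroup (PushoutI φ)), Finite F → meas F ≤ k →
    ∃ (i : Bool) (g : PushoutI φ), ∀ x ∈ F, g⁻¹ * x * g ∈ (of (φ := φ) i).range := by
  intro k
  induction k with
  | zero =>
    intro F hF hm
    refine base_case hφ F hF (fun y hy => ?_)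
    have h0 : (Nat.card F + 1) * maxlen F = 0 := by
      have := Nat.le_zero.1 hm
      rw [meas] at this
      omega
    rcases Nat.mul_eq_zero.1 h0 with h | h
    · omega
    · have := le_maxlen hF hy
      omega
  | succ k ih =>
    intro F hF hm
    by_cases hN1 : maxlen F ≤ 1
    · exact base_case hφ F hF (fun y hy => le_trans (le_maxlen hF hy) hN1)
    push_neg at hN1
    set N := maxlen F with hNdef
    -- the element attaining the maximum
    have hmemN : N ∈ len '' (F : Set (PushoutI φ)) :=
      Set.Nonempty.csSup_mem ⟨len 1, ⟨1, one_mem F, rfl⟩⟩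
        (Set.Finite.image _ (Set.toFinite _))
    obtain ⟨x, hxF, hxlen⟩ := hmemN
    have hxZ : x ∉ (base φ).range := by
      intro h
      rw [len_of_Z hφ h] at hxlen
      omega
    obtain ⟨a, b, hxw₀⟩ := w_of_notZ hφ hxZ
    rw [hxlen] at hxw₀
    have hb : b = a := not_cyc_red hφ hF hxF hxw₀
    rw [hb] at hxw₀
    have hxw : W φ a a N x := hxw₀
    -- every element of positive length starts and ends at `a`
    have hall : ∀ y ∈ F, y ∉ (base φ).range → W φ a a (len y) y := by
      intro y hyF hyZ
      obtain ⟨c, d, hyw⟩ := w_of_notZ hφ hyZ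
      have hc : c = a := by
        by_contra hca
        have hcat := hxw.cat hyw (fun h => hca h.symm)
        have hlen := len_spec hφ hcat
        have hle := le_maxlen hF (mul_mem hxF hyF)
        have hpos := hyw.pos
        omega
      have hd : d = a := by
        by_contra hda
        have hcat := hyw.cat hxw hda
        have hlen := len_spec hφ hcat
        have hle := le_maxlen hF (mul_mem hyF hxF)
        have hpos := hyw.pos
        omega
      subst hc; subst hd
      exact hyw
    -- decompose x = u * x'
    rcases hxw.cases' with ⟨h1, _⟩ | ⟨u, x', m, hxe, huK, huZ, hx'w, hNm⟩
    · omega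
    -- the conjugating automorphism
    set e := MulAut.conj u⁻¹ with hedef
    have he : ∀ y : PushoutI φ, e.toMonoidHom y = u⁻¹ * y * u := by
      intro y
      simp [hedef, MulAut.conj]
    set F' := F.map e.toMonoidHom with hF'def
    have hF' : Finite F' :=
      Finite.of_equiv _ (Subgroup.equivMapOfInjective F e.toMonoidHom
        (MulEquiv.injective e)).toEquiv
    have hcard : Nat.card F' = Nat.card F :=
      (Nat.card_congr (Subgroup.equivMapOfInjective F e.toMonoidHom
        (MulEquiv.injective e)).toEquiv).symm
    have hmemF' : ∀ z, z ∈ F' ↔ ∃ y ∈ F, u⁻¹ * y * u = z := by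
      intro z
      rw [hF'def, Subgroup.mem_map]
      constructor
      · rintro ⟨y, hy, rfl⟩; exact ⟨y, hy, (he y).symm⟩
      · rintro ⟨y, hy, rfl⟩; exact ⟨y, hy, he y⟩
    -- length bounds
    have hbound : ∀ y ∈ F, len (u⁻¹ * y * u) ≤ len y ∨ len (u⁻¹ * y * u) ≤ 1 := by
      intro y hyF
      by_cases hyZ : y ∈ (base φ).range
      · exact Or.inr (len_le_one_of_mem hφ
          (mul_mem (mul_mem (inv_mem huK) (Z_le_K a hyZ)) huK))
      · exact Or.inl (len_conj_le hφ huK (hall y hyF hyZ))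
    have hxdrop : len (u⁻¹ * x * u) ≤ N - 1 := by
      have hx'u : u⁻¹ * x * u = x' * u := by rw [hxe]; group
      rw [hx'u]
      rcases hx'w.mulR huK with ⟨hc1, _⟩ | ⟨hc2, _⟩ | hc3
      · rw [len_of_Z hφ hc1]; omega
      · rw [len_spec hφ hc2]; omega
      · rw [len_spec hφ hc3]; omega
    have hupper : ∀ z ∈ F', len z ≤ N := by
      intro z hz
      obtain ⟨y, hyF, rfl⟩ := (hmemF' z).1 hz
      rcases hbound y hyF with h | h
      · exact le_trans h (le_maxlen hF hyF)
      · omega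
    have hN'le : maxlen F' ≤ N :=
      csSup_le ⟨len 1, ⟨1, one_mem F', rfl⟩⟩ (by rintro _ ⟨z, hz, rfl⟩; exact hupper z hz)
    -- the measure decreases
    have hmeas : meas F' ≤ k := by
      have hcnt' : cnt F' ≤ Nat.card F := hcard ▸ cnt_le_card F' hF'
      have hmF : meas F = (Nat.card F + 1) * N + cnt F := by rw [hNdef]; rfl
      have hmF' : meas F' = (Nat.card F + 1) * maxlen F' + cnt F' := by rw [← hcard]; rfl
      rcases lt_or_eq_of_le hN'le with hlt | heqN
      · -- maximal length dropped
        have h3 : (Nat.card F + 1) * (maxlen F' + 1) ≤ (Nat.card F + 1) * N :=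
          Nat.mul_le_mul_left _ (by omega)
        have h4 : (Nat.card F + 1) * (maxlen F' + 1)
            = (Nat.card F + 1) * maxlen F' + (Nat.card F + 1) := by ring
        omega
      · -- maximal length stayed: the count drops
        have hcnt : cnt F' < cnt F := by
          have hc1 : cnt F = {y : PushoutI φ | y ∈ F ∧ len y = N}.ncard := by
            rw [hNdef]; rfl
          have hc2 : cnt F' = {z : PushoutI φ | z ∈ F' ∧ len z = N}.ncard := by
            rw [← heqN]; rfl
          rw [hc1, hc2]
          have hSfin : {y : PushoutI φ | y ∈ F ∧ len y = N}.Finite :=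
            Set.Finite.subset (Set.toFinite (F : Set (PushoutI φ))) (fun y hy => hy.1)
          have hxS : x ∈ {y : PushoutI φ | y ∈ F ∧ len y = N} := ⟨hxF, hxlen⟩
          have hsub : {z : PushoutI φ | z ∈ F' ∧ len z = N} ⊆
              (fun y => u⁻¹ * y * u) '' ({y : PushoutI φ | y ∈ F ∧ len y = N} \ {x}) := by
            rintro z ⟨hzF', hzlen⟩
            obtain ⟨y, hyF, rfl⟩ := (hmemF' z).1 hzF'
            have hylen : len y = N := by
              rcases hbound y hyF with h | h
              · have := le_maxlen hF hyF
                omega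
              · omega
            have hyx : y ≠ x := by
              rintro rfl
              omega
            exact ⟨y, ⟨⟨hyF, hylen⟩, hyx⟩, rfl⟩
          calc {z : PushoutI φ | z ∈ F' ∧ len z = N}.ncard
              ≤ ((fun y => u⁻¹ * y * u) ''
                  ({y : PushoutI φ | y ∈ F ∧ len y = N} \ {x})).ncard :=
                Set.ncard_le_ncard hsub
                  (Set.Finite.image _ (Set.Finite.diff (hSfin)))
            _ = ({y : PushoutI φ | y ∈ F ∧ len y = N} \ {x}).ncard :=
                Set.ncard_image_of_injective _
                  (fun y₁ y₂ h => by
                    have := h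
                    simpa using mul_left_cancel (mul_right_cancel this))
            _ < {y : PushoutI φ | y ∈ F ∧ len y = N}.ncard :=
                Set.ncard_diff_singleton_lt_of_mem hxS hSfin
        rw [heqN] at hmF'
        omega
    -- apply the induction hypothesis and transfer
    obtain ⟨i, g, hg⟩ := ih F' hF' hmeas
    refine ⟨i, u * g, fun t ht => ?_⟩
    have htF' : u⁻¹ * t * u ∈ F' := (hmemF' _).2 ⟨t, ht, rfl⟩
    have := hg _ htF'
    have heq : (u * g)⁻¹ * t * (u * g) = g⁻¹ * (u⁻¹ * t * u) * g := by group
    rw [heq]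
    exact this

end Main
end SerreAux

open Monoid in
/-- Serre's theorem: a finite subgroup of an amalgamated free product `G₁ *_C G₂`
(realized as the pushout of the family of injections `φ i : C →* G i`, `i : Bool`)
is contained in a conjugate of one of the factors. -/
theorem finite_subgroup_of_amalgam_conjugate_into_factor
    {C : Type*} [Group C] {G : Bool → Type*} [∀ i, Group (G i)]
    (φ : ∀ i, C →* G i) (hφ : ∀ i, Function.Injective (φ i))
    (F : Subgroup (PushoutI φ)) (hF : Finite F) :
    ∃ (i : Bool) (g : PushoutI φ), ∀ x ∈ F,
      g⁻¹ * x * g ∈ (PushoutI.of (φ := φ) i).range := by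
  exact SerreAux.main_aux hφ (SerreAux.meas F) F hF le_rfl
end
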